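/- Let 0 < μ < 2/5 and let n ≥ 1 be an odd integer. Then G_n > 0 if n ≡ 1 (mod 4), and G_n < 0 if n ≡ 3 (mod 4). -/

import Mathlib

open Real MeasureTheory

/-- The hyper-geometric integral `G_n = ∫₀^{π/2} t sin(nt)/√(1+(μt)²) dt`. -/
noncomputable def G (μ : ℝ) (n : ℕ) : ℝ :=
  ∫ t in (0:ℝ)..(π / 2), t * Real.sin ((n : ℝ) * t) / Real.sqrt (1 + (μ * t) ^ 2)

private lemma Gaux_S_pos (μ t : ℝ) : 0 < Real.sqrt (1 + (μ * t) ^ 2) :=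
  Real.sqrt_pos.2 (by positivity)

private lemma Gaux_S_sq (μ t : ℝ) : Real.sqrt (1 + (μ * t) ^ 2) ^ 2 = 1 + (μ * t) ^ 2 :=
  Real.sq_sqrt (by positivity)

private lemma Gaux_hasDerivAt_S (μ t : ℝ) :
    HasDerivAt (fun t => Real.sqrt (1 + (μ * t) ^ 2))
      (μ ^ 2 * t / Real.sqrt (1 + (μ * t) ^ 2)) t := by
  have h1 : HasDerivAt (fun t : ℝ => 1 + (μ * t) ^ 2) (2 * (μ ^ 2 * t)) t := by
    have h2 : HasDerivAt (fun t : ℝ => μ * t) μ t := by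
      simpa using (hasDerivAt_id t).const_mul μ
    have := (h2.pow 2).const_add 1
    refine this.congr_deriv ?_; push_cast; ring
  have := h1.sqrt (by positivity)
  refine this.congr_deriv ?_
  rw [eq_div_iff (by positivity)]
  field_simp

private lemma Gaux_hasDerivAt_f (μ t : ℝ) :
    HasDerivAt (fun t => t / Real.sqrt (1 + (μ * t) ^ 2))
      ((Real.sqrt (1 + (μ * t) ^ 2) ^ 3)⁻¹) t := by
  have hS := Gaux_S_pos μ t
  have hsq := Gaux_S_sq μ t
  have := (hasDerivAt_id t).div (Gaux_hasDerivAt_S μ t) (ne_of_gt hS)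
  refine this.congr_deriv ?_
  set S := Real.sqrt (1 + (μ * t) ^ 2)
  simp only [id]
  field_simp
  linear_combination hsq

private lemma Gaux_hasDerivAt_h (μ t : ℝ) :
    HasDerivAt (fun t => (Real.sqrt (1 + (μ * t) ^ 2) ^ 3)⁻¹)
      (-(3 * μ ^ 2 * t) / Real.sqrt (1 + (μ * t) ^ 2) ^ 5) t := by
  have hS := Gaux_S_pos μ t
  have := ((Gaux_hasDerivAt_S μ t).pow 3).inv (pow_ne_zero 3 hS.ne')
  refine this.congr_deriv ?_
  simp only [Pi.pow_apply]
  set S := Real.sqrt (1 + (μ * t) ^ 2)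
  field_simp
  ring

private lemma Gaux_contS (μ : ℝ) : Continuous fun t : ℝ => Real.sqrt (1 + (μ * t) ^ 2) :=
  (continuous_const.add (((continuous_const.mul continuous_id).pow 2))).sqrt

private lemma Gaux_cont_h (μ : ℝ) :
    Continuous fun t : ℝ => (Real.sqrt (1 + (μ * t) ^ 2) ^ 3)⁻¹ :=
  ((Gaux_contS μ).pow 3).inv₀ fun t => pow_ne_zero 3 (Gaux_S_pos μ t).ne'

private lemma Gaux_cont_h' (μ : ℝ) :
    Continuous fun t : ℝ => -(3 * μ ^ 2 * t) / Real.sqrt (1 + (μ * t) ^ 2) ^ 5 :=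
  ((continuous_const.mul continuous_id).neg).div ((Gaux_contS μ).pow 5)
    fun t => by positivity

set_option maxHeartbeats 1000000 in
/-- For `0 < μ < 2/5` and odd `n ≥ 1`, `G_n > 0` if `n ≡ 1 (mod 4)` and
`G_n < 0` if `n ≡ 3 (mod 4)`. -/
theorem G_sign (μ : ℝ) (hμ0 : 0 < μ) (hμ : μ < 2 / 5) (n : ℕ) (hn : 1 ≤ n) (hno : Odd n) :
    (n % 4 = 1 → 0 < G μ n) ∧ (n % 4 = 3 → G μ n < 0) := by
  obtain ⟨m, hm⟩ := hno
  set a : ℝ := π / 2 with ha_def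
  have ha : 0 < a := by positivity
  set S : ℝ → ℝ := fun t => Real.sqrt (1 + (μ * t) ^ 2) with hS_def
  set f : ℝ → ℝ := fun t => t / S t with hf_def
  set h : ℝ → ℝ := fun t => (S t ^ 3)⁻¹ with hh_def
  set h' : ℝ → ℝ := fun t => -(3 * μ ^ 2 * t) / S t ^ 5 with hh'_def
  have hnR : (0:ℝ) < (n:ℝ) := by exact_mod_cast hn
  have hnm : (n : ℝ) = 2 * m + 1 := by rw [hm]; push_cast; ring
  have hna : (n : ℝ) * a = m * π + π / 2 := by rw [hnm, ha_def]; ring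
  have hcos_na : Real.cos ((n:ℝ) * a) = 0 := by
    rw [hna, Real.cos_add_pi_div_two, Real.sin_nat_mul_pi, neg_zero]
  have hsin_na : Real.sin ((n:ℝ) * a) = (-1:ℝ) ^ m := by
    rw [hna, Real.sin_add_pi_div_two]
    simpa using Real.cos_nat_mul_pi_sub 0 m
  -- integrabilities
  have hint_h : IntervalIntegrable h volume 0 a := (Gaux_cont_h μ).intervalIntegrable 0 a
  have hint_h' : IntervalIntegrable h' volume 0 a := (Gaux_cont_h' μ).intervalIntegrable 0 a
  have hcont_sin : Continuous fun t : ℝ => Real.sin ((n:ℝ) * t) :=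
    Real.continuous_sin.comp (continuous_const.mul continuous_id)
  have hcont_cos : Continuous fun t : ℝ => Real.cos ((n:ℝ) * t) :=
    Real.continuous_cos.comp (continuous_const.mul continuous_id)
  -- first integration by parts
  have key1 : G μ n = (1/(n:ℝ)) * ∫ t in (0:ℝ)..a, h t * Real.cos ((n:ℝ) * t) := by
    have hu : ∀ x ∈ Set.uIcc (0:ℝ) a, HasDerivAt f (h x) x := fun x _ =>
      Gaux_hasDerivAt_f μ x
    have hv : ∀ x ∈ Set.uIcc (0:ℝ) a,
        HasDerivAt (fun t => -Real.cos ((n:ℝ) * t) / n) (Real.sin ((n:ℝ) * x)) x := by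
      intro x _
      have hmul : HasDerivAt (fun t : ℝ => (n:ℝ) * t) (n:ℝ) x := by
        simpa using (hasDerivAt_id x).const_mul (n:ℝ)
      have := (hmul.cos.neg).div_const (n:ℝ)
      refine this.congr_deriv ?_
      field_simp
    have hibp := intervalIntegral.integral_mul_deriv_eq_deriv_mul hu hv hint_h
      (hcont_sin.intervalIntegrable 0 a)
    have hG : G μ n = ∫ x in (0:ℝ)..a, f x * Real.sin ((n:ℝ) * x) := by
      unfold G
      apply intervalIntegral.integral_congr
      intro x _
      simp only [hf_def, hS_def]
      ring
    rw [hG, hibp]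
    have hf0 : f 0 = 0 := by simp [hf_def]
    have hrw : ∫ x in (0:ℝ)..a, h x * (-Real.cos ((n:ℝ) * x) / n)
        = (-(1/(n:ℝ))) * ∫ x in (0:ℝ)..a, h x * Real.cos ((n:ℝ) * x) := by
      rw [← intervalIntegral.integral_const_mul]
      apply intervalIntegral.integral_congr
      intro x _; ring
    rw [hrw, hf0, hcos_na]
    ring
  -- second integration by parts
  have key2 : ∫ t in (0:ℝ)..a, h t * Real.cos ((n:ℝ) * t)
      = (1/(n:ℝ)) * ((-1:ℝ)^m * h a - ∫ t in (0:ℝ)..a, h' t * Real.sin ((n:ℝ) * t)) := by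
    have hu : ∀ x ∈ Set.uIcc (0:ℝ) a, HasDerivAt h (h' x) x := fun x _ =>
      Gaux_hasDerivAt_h μ x
    have hv : ∀ x ∈ Set.uIcc (0:ℝ) a,
        HasDerivAt (fun t => Real.sin ((n:ℝ) * t) / n) (Real.cos ((n:ℝ) * x)) x := by
      intro x _
      have hmul : HasDerivAt (fun t : ℝ => (n:ℝ) * t) (n:ℝ) x := by
        simpa using (hasDerivAt_id x).const_mul (n:ℝ)
      have := (hmul.sin).div_const (n:ℝ)
      refine this.congr_deriv ?_
      field_simp
    have hibp := intervalIntegral.integral_mul_deriv_eq_deriv_mul hu hv hint_h'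
      (hcont_cos.intervalIntegrable 0 a)
    rw [hibp]
    have hrw : ∫ x in (0:ℝ)..a, h' x * (Real.sin ((n:ℝ) * x) / n)
        = (1/(n:ℝ)) * ∫ x in (0:ℝ)..a, h' x * Real.sin ((n:ℝ) * x) := by
      rw [← intervalIntegral.integral_const_mul]
      apply intervalIntegral.integral_congr
      intro x _; ring
    rw [hrw, hsin_na]
    simp only [mul_zero, Real.sin_zero, zero_div]
    ring
  set I : ℝ := ∫ t in (0:ℝ)..a, h' t * Real.sin ((n:ℝ) * t) with hI_def
  have keyG : G μ n = (1/(n:ℝ)^2) * ((-1:ℝ)^m * h a - I) := by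
    rw [key1, key2]; ring
  -- h 0 = 1
  have hh0 : h 0 = 1 := by simp [hh_def, hS_def]
  -- bound on I
  have hIbound : |I| ≤ 1 - h a := by
    have h1 : |I| ≤ ∫ t in (0:ℝ)..a, |h' t * Real.sin ((n:ℝ) * t)| :=
      intervalIntegral.abs_integral_le_integral_abs ha.le
    have h2 : (∫ t in (0:ℝ)..a, |h' t * Real.sin ((n:ℝ) * t)|)
        ≤ ∫ t in (0:ℝ)..a, -h' t := by
      apply intervalIntegral.integral_mono_on ha.le
      · exact ((Gaux_cont_h' μ).mul hcont_sin).abs.intervalIntegrable 0 a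
      · exact hint_h'.neg
      · intro x hx
        have hx0 : 0 ≤ x := hx.1
        have hh'le : h' x ≤ 0 := by
          simp only [hh'_def]
          apply div_nonpos_of_nonpos_of_nonneg
          · nlinarith [hμ0.le]
          · positivity
        rw [abs_mul, abs_of_nonpos hh'le]
        calc -h' x * |Real.sin ((n:ℝ) * x)| ≤ -h' x * 1 := by
              apply mul_le_mul_of_nonneg_left (Real.abs_sin_le_one _) (by linarith)
          _ = -h' x := by ring
    have h3 : (∫ t in (0:ℝ)..a, -h' t) = 1 - h a := by
      have := intervalIntegral.integral_eq_sub_of_hasDerivAt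
        (f := h) (f' := h') (a := (0:ℝ)) (b := a)
        (fun x _ => Gaux_hasDerivAt_h μ x) hint_h'
      rw [intervalIntegral.integral_neg, this, hh0]
      ring
    linarith
  -- h a > 1/2
  have hha : 1/2 < h a := by
    have hSa := Gaux_S_pos μ a
    have hsq : S a ^ 2 = 1 + (μ * a) ^ 2 := Gaux_S_sq μ a
    have hpi : π < 3.15 := Real.pi_lt_d2
    have hma : μ * a < 0.63 := by
      have : a < 1.575 := by rw [ha_def]; linarith
      nlinarith
    have hma0 : 0 < μ * a := by positivity
    have hcube : (S a ^ 3) ^ 2 < 2 ^ 2 := by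
      have he : (S a ^ 3) ^ 2 = (S a ^ 2) ^ 3 := by ring
      rw [he, hsq]
      have hy : (μ * a) ^ 2 < 0.4 := by nlinarith
      have h14 : 1 + (μ * a) ^ 2 ≤ 1.4 := by linarith
      have h2 := pow_le_pow_left₀ (by positivity : (0:ℝ) ≤ 1 + (μ * a) ^ 2) h14 3
      norm_num at h2 ⊢
      linarith
    have hS3 : S a ^ 3 < 2 := by
      have h30 : (0:ℝ) ≤ 2 := by norm_num
      exact lt_of_pow_lt_pow_left₀ 2 h30 hcube
    have hS3pos : 0 < S a ^ 3 := by positivity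
    show 1/2 < (S a ^ 3)⁻¹
    have h3 : S a ^ 3 * (S a ^ 3)⁻¹ = 1 := mul_inv_cancel₀ (ne_of_gt hS3pos)
    nlinarith [inv_pos.2 hS3pos]
  have hn2 : (0:ℝ) < 1/(n:ℝ)^2 := by positivity
  constructor
  · intro h4
    have hmeven : m % 2 = 0 := by omega
    have hpow : (-1:ℝ)^m = 1 := Even.neg_one_pow (Nat.even_iff.2 hmeven)
    rw [keyG, hpow]
    have : I ≤ 1 - h a := le_trans (le_abs_self I) hIbound
    nlinarith
  · intro h4
    have hmodd : m % 2 = 1 := by omega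
    have hpow : (-1:ℝ)^m = -1 := Odd.neg_one_pow (Nat.odd_iff.2 hmodd)
    rw [keyG, hpow]
    have : -(1 - h a) ≤ I := by
      have := neg_abs_le I
      linarith [hIbound]
    nlinarith
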